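/- Let n ≥ 1 and let [k_n, k_{n−1}, …, k_1] be an admissible sequence of nonnegative integers. Then the permutation w = c_{k_n,n} c_{k_{n−1},n−1} ⋯ c_{k_1,1} ∈ S_{2n} is the unique element of minimal length in its double coset O_w, and ℓ(w) = k_n + k_{n−1} + ⋯ + k_1. -/

import Mathlib

/-- The subgroup `S ⊆ S_{2n}` of permutations fixing each of the last `n` points
(`n+1, …, 2n` in one-based terms, i.e. the indices `i` with `n ≤ i` in zero-based terms). -/
def Sfix (n : ℕ) : Set (Equiv.Perm (Fin (2 * n))) :=
  {g | ∀ i : Fin (2 * n), n ≤ (i : ℕ) → g i = i}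

/-- The double coset `O_σ = {g σ h : g, h ∈ S}`. -/
def dcoset (n : ℕ) (σ : Equiv.Perm (Fin (2 * n))) : Set (Equiv.Perm (Fin (2 * n))) :=
  {t | ∃ g ∈ Sfix n, ∃ h ∈ Sfix n, t = g * σ * h}

/-- The length of a permutation: its number of inversions. -/
noncomputable def len (n : ℕ) (σ : Equiv.Perm (Fin (2 * n))) : ℕ :=
  {p : Fin (2 * n) × Fin (2 * n) | p.1 < p.2 ∧ σ p.2 < σ p.1}.ncard

/-- The adjacent transposition `s_i = (i, i+1)` of `{1, …, m}` (one-based), i.e. the swap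
of the zero-based positions `i-1` and `i`; it is the identity for out-of-range `i`. -/
def sTrans (m i : ℕ) : Equiv.Perm (Fin m) :=
  if h : 1 ≤ i ∧ i < m then
    Equiv.swap ⟨i - 1, by omega⟩ ⟨i, h.2⟩
  else 1

/-- The cycle `c_{k,j} = s_{j+n-k} s_{j+n-k+1} ⋯ s_{j+n-1} ∈ S_{2n}` (with `c_{0,j} = e`). -/
def cyc (n k j : ℕ) : Equiv.Perm (Fin (2 * n)) :=
  ((List.range k).map fun t => sTrans (2 * n) (j + n - k + t)).prod

/-- The product `c_{k_n,n} c_{k_{n-1},n-1} ⋯ c_{k_1,1} ∈ S_{2n}` associated to a sequence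
`[k_n, …, k_1]` (encoded as a function `k : ℕ → ℕ` on the indices `1, …, n`). -/
def cycProd (n : ℕ) (k : ℕ → ℕ) : Equiv.Perm (Fin (2 * n)) :=
  ((List.range n).map fun t => cyc n (k (n - t)) (n - t)).prod

/-- The bound `max (max_{j < i ≤ n} (k_i + j + 1 - i)) j` appearing in admissibility. -/
def admBound (n : ℕ) (k : ℕ → ℕ) (j : ℕ) : ℕ :=
  max ((Finset.Ioc j n).sup fun i => k i + j + 1 - i) j

/-- A sequence `[k_n, …, k_1]` of nonnegative integers is admissible if
`k_j ≤ max (max_{j < i ≤ n} (k_i + j + 1 - i)) j` for every `1 ≤ j ≤ n`. -/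
def Admissible (n : ℕ) (k : ℕ → ℕ) : Prop :=
  ∀ j, 1 ≤ j → j ≤ n → k j ≤ admBound n k j

/-! ### Auxiliary definitions and lemmas -/

/-- Inversion set as a finset. -/
def invF {N : ℕ} (σ : Equiv.Perm (Fin N)) : Finset (Fin N × Fin N) :=
  Finset.univ.filter fun p => p.1 < p.2 ∧ σ p.2 < σ p.1

/-- Number of inversions, finset version. -/
def lenF {N : ℕ} (σ : Equiv.Perm (Fin N)) : ℕ := (invF σ).card

lemma len_eq_lenF (n : ℕ) (σ : Equiv.Perm (Fin (2 * n))) : len n σ = lenF σ := by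
  have h : {p : Fin (2 * n) × Fin (2 * n) | p.1 < p.2 ∧ σ p.2 < σ p.1} = ↑(invF σ) := by
    ext p; simp [invF]
  rw [len, h, Set.ncard_coe_finset, lenF]

lemma mem_invF {N : ℕ} (σ : Equiv.Perm (Fin N)) (p : Fin N × Fin N) :
    p ∈ invF σ ↔ p.1 < p.2 ∧ σ p.2 < σ p.1 := by simp [invF]

lemma lenF_one {N : ℕ} : lenF (1 : Equiv.Perm (Fin N)) = 0 := by
  rw [lenF, Finset.card_eq_zero]; ext p; simp only [mem_invF, Equiv.Perm.one_apply, Finset.notMem_empty, iff_false]; intro h1; exact absurd h1.1 (asymm h1.2)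

lemma sTrans_eq_swap {m i : ℕ} (h1 : 1 ≤ i) (h2 : i < m) :
    sTrans m i = Equiv.swap ⟨i - 1, by omega⟩ ⟨i, h2⟩ := by
  rw [sTrans, dif_pos ⟨h1, h2⟩]

lemma cyc_zero (n j : ℕ) : cyc n 0 j = 1 := by simp [cyc]

lemma lenF_mul_swap {N : ℕ} (u : Equiv.Perm (Fin N)) (a b : Fin N)
    (hab : (a : ℕ) + 1 = (b : ℕ)) (h : u a < u b) :
    lenF (u * Equiv.swap a b) = lenF u + 1 := by
  set s := Equiv.swap a b with hs
  have hablt : a < b := by rw [Fin.lt_def]; omega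
  have key : ∀ p q : Fin N, p < q → ¬(p = a ∧ q = b) → s p < s q := by
    intro p q hpq hne
    rw [Fin.lt_def] at hpq
    rw [Fin.lt_def]
    rw [show ¬(p = a ∧ q = b) ↔ ¬((p : ℕ) = a ∧ (q : ℕ) = b) by
      simp only [Fin.ext_iff]] at hne
    simp only [hs, Equiv.swap_apply_def]
    split_ifs <;> simp only [Fin.ext_iff] at * <;> omega
  have hinj : Function.Injective fun p : Fin N × Fin N => (s p.1, s p.2) := by
    intro p q hpq
    simp only [Prod.mk.injEq] at hpq
    exact Prod.ext (s.injective hpq.1) (s.injective hpq.2)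
  have hnot : (a, b) ∉ (invF u).image fun p => (s p.1, s p.2) := by
    rintro hmem
    obtain ⟨⟨x, y⟩, hxy, hx⟩ := Finset.mem_image.mp hmem
    simp only [Prod.mk.injEq] at hx
    have hxb : x = b := by
      have := congrArg s hx.1; simpa [hs, Equiv.swap_apply_self, Equiv.swap_apply_left] using this
    have hya : y = a := by
      have := congrArg s hx.2; simpa [hs, Equiv.swap_apply_self, Equiv.swap_apply_right] using this
    rw [mem_invF] at hxy
    subst hxb hya
    exact absurd hxy.1 (asymm hablt)
  have himg : invF (u * s) = insert (a, b) ((invF u).image fun p => (s p.1, s p.2)) := by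
    ext ⟨p, q⟩
    simp only [mem_invF, Finset.mem_insert, Finset.mem_image, Prod.mk.injEq,
      Equiv.Perm.mul_apply]
    constructor
    · rintro ⟨hpq, hinv⟩
      by_cases hpab : p = a ∧ q = b
      · exact Or.inl ⟨hpab.1, hpab.2⟩
      · refine Or.inr ⟨(s p, s q), ?_, ?_, ?_⟩
        · exact ⟨key p q hpq hpab, hinv⟩
        · simp [hs, Equiv.swap_apply_self]
        · simp [hs, Equiv.swap_apply_self]
    · rintro (⟨rfl, rfl⟩ | ⟨⟨x, y⟩, hxy, hx, hy⟩)
      · refine ⟨hablt, ?_⟩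
        rw [hs, Equiv.swap_apply_left, Equiv.swap_apply_right]
        exact h
      · obtain ⟨hxylt, hxyinv⟩ : x < y ∧ u y < u x := hxy
        have hnxy : ¬(x = a ∧ y = b) := by
          rintro ⟨rfl, rfl⟩; exact absurd hxyinv (asymm h)
        subst hx hy
        refine ⟨key x y hxylt hnxy, ?_⟩
        simpa [hs, Equiv.swap_apply_self] using hxyinv
  rw [lenF, lenF, himg, Finset.card_insert_of_notMem hnot, Finset.card_image_of_injective _ hinj]

lemma lenF_mul_sTrans {N i : ℕ} (u : Equiv.Perm (Fin N)) (h1 : 1 ≤ i) (h2 : i < N)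
    (hu : u ⟨i - 1, by omega⟩ < u ⟨i, h2⟩) :
    lenF (u * sTrans N i) = lenF u + 1 := by
  rw [sTrans, dif_pos ⟨h1, h2⟩]
  exact lenF_mul_swap u _ _ (by simp; omega) hu

lemma cyc_succ (n k j : ℕ) (hk : k + 1 ≤ n + j) :
    cyc n (k + 1) j = sTrans (2 * n) (j + n - (k + 1)) * cyc n k j := by
  rw [cyc, cyc, List.range_succ_eq_map, List.map_cons, List.prod_cons, List.map_map]
  have hfun : ((fun t => sTrans (2 * n) (j + n - (k + 1) + t)) ∘ Nat.succ)
      = fun t => sTrans (2 * n) (j + n - k + t) := by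
    funext t
    simp only [Function.comp_apply]
    congr 1
    omega
  rw [hfun, Nat.add_zero]

lemma cyc_mul (n j : ℕ) (hj : 1 ≤ j) (hjn : j ≤ n) :
    ∀ k, k ≤ n + j - 1 → ∀ u : Equiv.Perm (Fin (2 * n)),
    (∀ x y : Fin (2 * n), n + j - 1 - k ≤ (x : ℕ) → x < y → (y : ℕ) ≤ n + j - 1 → u x < u y) →
    lenF (u * cyc n k j) = lenF u + k
    ∧ (∀ x : Fin (2 * n), ((x : ℕ) < n + j - 1 - k ∨ n + j - 1 < (x : ℕ)) →
        (u * cyc n k j) x = u x)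
    ∧ (∀ x x' : Fin (2 * n), n + j - 1 - k ≤ (x : ℕ) → (x : ℕ) < n + j - 1 →
        (x' : ℕ) = (x : ℕ) + 1 → (u * cyc n k j) x = u x')
    ∧ (∀ x x' : Fin (2 * n), (x : ℕ) = n + j - 1 → (x' : ℕ) = n + j - 1 - k →
        (u * cyc n k j) x = u x') := by
  intro k
  induction k with
  | zero =>
    intro _ u _
    rw [cyc_zero, mul_one]
    refine ⟨rfl, fun x _ => rfl, fun x x' h1 h2 h3 => by omega, fun x x' h1 h2 => ?_⟩
    have hxx : x = x' := Fin.ext (by omega)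
    rw [hxx]
  | succ k ih =>
    intro hk1 u hsort
    have hn1 : 1 ≤ n := by omega
    rw [cyc_succ n k j (by omega), ← mul_assoc]
    set a := j + n - (k + 1) with ha
    have ha1 : 1 ≤ a := by omega
    have ha2 : a < 2 * n := by omega
    have ha12 : a - 1 < 2 * n := by omega
    set pa1 : Fin (2 * n) := ⟨a - 1, ha12⟩ with hpa1
    set pa : Fin (2 * n) := ⟨a, ha2⟩ with hpa
    have hvpa1 : (pa1 : ℕ) = a - 1 := rfl
    have hvpa : (pa : ℕ) = a := rfl
    set u' := u * sTrans (2 * n) a with hu'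
    have happ : ∀ x : Fin (2 * n), u' x = u (Equiv.swap pa1 pa x) := by
      intro x
      rw [hu', sTrans_eq_swap ha1 ha2, Equiv.Perm.mul_apply]
    have hu'ne : ∀ x : Fin (2 * n), (x : ℕ) ≠ a - 1 → (x : ℕ) ≠ a → u' x = u x := by
      intro x h1 h2
      rw [happ, Equiv.swap_apply_of_ne_of_ne
        (fun hc => h1 (congrArg Fin.val hc)) (fun hc => h2 (congrArg Fin.val hc))]
    have hu'a : u' pa = u pa1 := by rw [happ, Equiv.swap_apply_right]
    have hu'a1 : u' pa1 = u pa := by rw [happ, Equiv.swap_apply_left]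
    have hwl : n + j - 1 - (k + 1) = a - 1 := by omega
    have hwk : n + j - 1 - k = a := by omega
    have hsort' : ∀ x y : Fin (2 * n), n + j - 1 - k ≤ (x : ℕ) → x < y →
        (y : ℕ) ≤ n + j - 1 → u' x < u' y := by
      intro x y hx hxy hy
      rw [hwk] at hx
      have hxy' : (x : ℕ) < (y : ℕ) := hxy
      have hy' : u' y = u y := hu'ne y (by omega) (by omega)
      rcases Nat.eq_or_lt_of_le hx with hxa | hxa
      · have hxpa : x = pa := Fin.ext hxa.symm
        rw [hxpa, hu'a, hy']
        exact hsort pa1 y (by rw [hvpa1]; omega) (by rw [Fin.lt_def, hvpa1]; omega) hy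
      · rw [hu'ne x (by omega) (by omega), hy']
        exact hsort x y (by omega) hxy hy
    obtain ⟨ihlen, ihE1, ihE2, ihE3⟩ := ih (by omega) u' hsort'
    have hl : lenF u' = lenF u + 1 := by
      rw [hu']
      refine lenF_mul_sTrans u ha1 ha2 ?_
      exact hsort ⟨a - 1, by omega⟩ ⟨a, ha2⟩ (by simp; omega) (by rw [Fin.lt_def]; simp; omega)
        (by simp; omega)
    refine ⟨?_, ?_, ?_, ?_⟩
    · rw [ihlen, hl]; omega
    · intro x hx
      rcases hx with hx | hx
      · rw [hwl] at hx
        rw [ihE1 x (Or.inl (by omega)), hu'ne x (by omega) (by omega)]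
      · rw [ihE1 x (Or.inr hx), hu'ne x (by omega) (by omega)]
    · intro x x' hx1 hx2 hx3
      rw [hwl] at hx1
      rcases Nat.eq_or_lt_of_le hx1 with hxa | hxa
      · have hxpa1 : x = pa1 := Fin.ext hxa.symm
        have hxpa' : x' = pa := Fin.ext (by rw [hvpa, hx3]; omega)
        rw [ihE1 x (Or.inl (by omega)), hxpa1, hu'a1, hxpa']
      · rw [ihE2 x x' (by omega) hx2 hx3, hu'ne x' (by omega) (by omega)]
    · intro x x' hx1 hx2
      rw [hwl] at hx2
      have hx'pa1 : x' = pa1 := Fin.ext (by rw [hvpa1, hx2])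
      rw [ihE3 x pa hx1 (by rw [hvpa]; omega), hu'a, hx'pa1]

def Dc (n : ℕ) (k : ℕ → ℕ) : ℕ → ℕ
  | 0 => 0
  | m + 1 => Dc n k m + (if n - m + Dc n k m ≤ k (n - m) then 1 else 0)

lemma Dc_succ (n : ℕ) (k : ℕ → ℕ) (m : ℕ) :
    Dc n k (m + 1) = Dc n k m + (if n - m + Dc n k m ≤ k (n - m) then 1 else 0) := rfl

lemma Dc_le (n : ℕ) (k : ℕ → ℕ) (m : ℕ) : Dc n k m ≤ m := by
  induction m with
  | zero => simp [Dc]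
  | succ m ih => rw [Dc_succ]; split <;> omega

lemma Dc_mono (n : ℕ) (k : ℕ → ℕ) : Monotone (Dc n k) := by
  apply monotone_nat_of_le_succ
  intro m; rw [Dc_succ]; split <;> omega

lemma arith (n : ℕ) (k : ℕ → ℕ) (hk : Admissible n k) :
    ∀ m, m < n → k (n - m) ≤ (n - m) + Dc n k m := by
  intro m
  induction m using Nat.strong_induction_on with
  | _ m ih =>
    intro hm
    refine (hk (n - m) (by omega) (by omega)).trans ?_
    rw [admBound]
    apply max_le _ (by omega)
    apply Finset.sup_le
    intro i hi
    rw [Finset.mem_Ioc] at hi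
    have him : i = n - (n - i) := by omega
    have hm'm : n - i < m := by omega
    have ihm' := ih (n - i) hm'm (by omega)
    rw [← him] at ihm'
    have hmono : Dc n k (n - i + 1) ≤ Dc n k m := Dc_mono n k (by omega)
    have hDs := Dc_succ n k (n - i)
    rw [← him] at hDs
    by_cases hfire : i + Dc n k (n - i) ≤ k i
    · rw [if_pos hfire] at hDs
      omega
    · rw [if_neg hfire] at hDs
      omega

def Qp (n : ℕ) (k : ℕ → ℕ) (m : ℕ) : Equiv.Perm (Fin (2 * n)) :=
  ((List.range m).map fun t => cyc n (k (n - t)) (n - t)).prod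

lemma Qp_succ (n : ℕ) (k : ℕ → ℕ) (m : ℕ) :
    Qp n k (m + 1) = Qp n k m * cyc n (k (n - m)) (n - m) := by
  rw [Qp, Qp, List.range_succ, List.map_append, List.prod_append]; simp

lemma main_inv (n : ℕ) (hn : 1 ≤ n) (k : ℕ → ℕ) (hk : Admissible n k) :
    ∀ m, m ≤ n →
    (∀ x y : Fin (2 * n), x < y → (y : ℕ) < n + (n - m) → Qp n k m x < Qp n k m y)
    ∧ (∀ x : Fin (2 * n), (x : ℕ) < n + (n - m) →
        ((Qp n k m x : ℕ) < n ↔ (x : ℕ) < n - Dc n k m))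
    ∧ (∀ x y : Fin (2 * n), x < y → n + (n - m) ≤ (y : ℕ) →
        (Qp n k m x : ℕ) < n → (Qp n k m y : ℕ) < n → Qp n k m x < Qp n k m y)
    ∧ lenF (Qp n k m) = ∑ t ∈ Finset.range m, k (n - t) := by
  intro m
  induction m with
  | zero =>
    intro _
    refine ⟨?_, ?_, ?_, ?_⟩
    · intro x y hxy _; simpa [Qp] using hxy
    · intro x _; simp [Qp, Dc]
    · intro x y hxy _ _ _; simpa [Qp] using hxy
    · simp [Qp, lenF_one]
  | succ m ih =>
    intro hm1
    obtain ⟨hS, hC, hV, hL⟩ := ih (by omega)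
    set j := n - m with hj
    set K := k j with hK
    set D := Dc n k m with hD0
    have hj1 : 1 ≤ j := by omega
    have hjn : j ≤ n := by omega
    have hDle : D ≤ m := Dc_le n k m
    have hKb : K ≤ j + D := arith n k hk m (by omega)
    have hKn : K ≤ n + j - 1 := by omega
    set A := n + j - 1 - K with hA0
    have hQs : Qp n k (m + 1) = Qp n k m * cyc n K j := Qp_succ n k m
    have hDs : Dc n k (m + 1) = D + (if j + D ≤ K then 1 else 0) := Dc_succ n k m
    have hsortw : ∀ x y : Fin (2 * n), n + j - 1 - K ≤ (x : ℕ) → x < y →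
        (y : ℕ) ≤ n + j - 1 → Qp n k m x < Qp n k m y := by
      intro x y _ hxy hy
      exact hS x y hxy (by omega)
    obtain ⟨hlen, hE1, hE2, hE3⟩ := cyc_mul n j hj1 hjn K hKn (Qp n k m) hsortw
    have hreg : n + (n - (m + 1)) = n + j - 1 := by omega
    have hkey : ∀ x : Fin (2 * n), (x : ℕ) < n + j - 1 → ∃ xt : Fin (2 * n),
        (Qp n k m * cyc n K j) x = Qp n k m xt ∧
        (((x : ℕ) < A ∧ (xt : ℕ) = (x : ℕ)) ∨ (A ≤ (x : ℕ) ∧ (xt : ℕ) = (x : ℕ) + 1)) := by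
      intro x hx
      by_cases hAx : (x : ℕ) < A
      · exact ⟨x, hE1 x (Or.inl hAx), Or.inl ⟨hAx, rfl⟩⟩
      · push_neg at hAx
        exact ⟨⟨(x : ℕ) + 1, by omega⟩, hE2 x ⟨(x : ℕ) + 1, by omega⟩ hAx hx rfl,
          Or.inr ⟨hAx, rfl⟩⟩
    have hApos : A < 2 * n := by omega
    refine ⟨?_, ?_, ?_, ?_⟩
    · intro x y hxy hy
      rw [hreg] at hy
      have hxy' : (x : ℕ) < (y : ℕ) := hxy
      rw [hQs]
      obtain ⟨xt, hxt, hxtc⟩ := hkey x (by omega)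
      obtain ⟨yt, hyt, hytc⟩ := hkey y hy
      rw [hxt, hyt]
      exact hS xt yt (by rw [Fin.lt_def]; omega) (by omega)
    · intro x hx
      rw [hreg] at hx
      rw [hQs]
      obtain ⟨xt, hxt, hxtc⟩ := hkey x hx
      rw [hxt]
      have hCx := hC xt (by omega)
      by_cases hfire : j + D ≤ K
      · rw [hDs, if_pos hfire]
        constructor
        · intro hlt; have := hCx.mp hlt; omega
        · intro hlt; exact hCx.mpr (by omega)
      · rw [hDs, if_neg hfire]
        constructor
        · intro hlt; have := hCx.mp hlt; omega
        · intro hlt; exact hCx.mpr (by omega)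
    · intro x y hxy hy hQx hQy
      rw [hreg] at hy
      rw [hQs] at hQx hQy ⊢
      have hxy' : (x : ℕ) < (y : ℕ) := hxy
      rcases Nat.lt_or_ge (y : ℕ) (n + j) with hyc | hyc
      · have hyv : (y : ℕ) = n + j - 1 := by omega
        have hyE : (Qp n k m * cyc n K j) y = Qp n k m ⟨A, hApos⟩ := hE3 y ⟨A, hApos⟩ hyv rfl
        rw [hyE] at hQy ⊢
        have hAr : A < n - D := by
          have h1 := (hC ⟨A, hApos⟩ (by simp only [Fin.val_mk]; omega)).mp (by exact hQy)
          simpa using h1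
        obtain ⟨xt, hxt, hxtc⟩ := hkey x (by omega)
        rw [hxt] at hQx ⊢
        rcases hxtc with ⟨h1, h2⟩ | ⟨h1, h2⟩
        · exact hS xt ⟨A, hApos⟩ (by rw [Fin.lt_def]; simp only [Fin.val_mk]; omega)
            (by simp only [Fin.val_mk]; omega)
        · have := (hC xt (by omega)).mp hQx
          omega
      · have hyE : (Qp n k m * cyc n K j) y = Qp n k m y := hE1 y (Or.inr (by omega))
        rw [hyE] at hQy ⊢
        rcases Nat.lt_or_ge (x : ℕ) (n + j - 1) with hxc | hxc
        · obtain ⟨xt, hxt, hxtc⟩ := hkey x hxc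
          rw [hxt] at hQx ⊢
          exact hV xt y (by rw [Fin.lt_def]; omega) (by omega) hQx hQy
        · rcases Nat.eq_or_lt_of_le hxc with hxc' | hxc'
          · have hxE : (Qp n k m * cyc n K j) x = Qp n k m ⟨A, hApos⟩ :=
              hE3 x ⟨A, hApos⟩ hxc'.symm rfl
            rw [hxE] at hQx ⊢
            exact hV ⟨A, hApos⟩ y (by rw [Fin.lt_def]; simp only [Fin.val_mk]; omega)
              (by omega) hQx hQy
          · have hxE : (Qp n k m * cyc n K j) x = Qp n k m x := hE1 x (Or.inr (by omega))
            rw [hxE] at hQx ⊢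
            exact hV x y hxy (by omega) hQx hQy
    · rw [hQs, hlen, hL, Finset.sum_range_succ]

/-- Minimal form: every inversion has second position in B and first value in B. -/
def MF (n : ℕ) (σ : Equiv.Perm (Fin (2 * n))) : Prop :=
  ∀ p q : Fin (2 * n), p < q → σ q < σ p → n ≤ (q : ℕ) ∧ n ≤ (σ p : ℕ)

lemma one_mem_sfix (n : ℕ) : (1 : Equiv.Perm (Fin (2 * n))) ∈ Sfix n := fun _ _ => rfl

lemma sfix_inv {n : ℕ} {g : Equiv.Perm (Fin (2 * n))} (hg : g ∈ Sfix n) : g⁻¹ ∈ Sfix n := by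
  intro i hi
  have h1 := hg i hi
  nth_rewrite 1 [← h1]
  simp

lemma sfix_lt {n : ℕ} {g : Equiv.Perm (Fin (2 * n))} (hg : g ∈ Sfix n) {i : Fin (2 * n)}
    (hi : (i : ℕ) < n) : ((g i : Fin (2 * n)) : ℕ) < n := by
  by_contra hc
  push_neg at hc
  have h1 := hg (g i) hc
  have h2 := g.injective h1
  rw [h2] at hc
  omega

/-- The inversion-set injection `(p₁,p₂) ↦ (h⁻¹ p₁, h⁻¹ p₂)`. -/
lemma mf_maps {n : ℕ} {w g h : Equiv.Perm (Fin (2 * n))} (hw : MF n w)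
    (hg : g ∈ Sfix n) (hh : h ∈ Sfix n) :
    ∀ p ∈ invF w, (h⁻¹ p.1, h⁻¹ p.2) ∈ invF (g * w * h) := by
  rintro ⟨p1, p2⟩ hp
  rw [mem_invF] at hp ⊢
  dsimp only at hp ⊢
  obtain ⟨hlt, hinv⟩ := hp
  obtain ⟨hq, hv⟩ := hw p1 p2 hlt hinv
  have hh' : h⁻¹ ∈ Sfix n := sfix_inv hh
  have e2 : h⁻¹ p2 = p2 := hh' p2 hq
  have happ : ∀ x : Fin (2 * n), (g * w * h) (h⁻¹ x) = g (w x) := by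
    intro x; simp [Equiv.Perm.mul_apply]
  have hv1 : g (w p1) = w p1 := hg (w p1) hv
  constructor
  · rw [e2]
    rcases Nat.lt_or_ge (p1 : ℕ) n with h1 | h1
    · have := sfix_lt hh' h1
      rw [Fin.lt_def]; omega
    · rw [hh' p1 h1]; exact hlt
  · rw [happ, happ, hv1]
    rcases Nat.lt_or_ge ((w p2 : Fin (2 * n)) : ℕ) n with h2 | h2
    · have := sfix_lt hg h2
      rw [Fin.lt_def]; omega
    · rw [hg (w p2) h2]; exact hinv

lemma mf_min {n : ℕ} {w g h : Equiv.Perm (Fin (2 * n))} (hw : MF n w)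
    (hg : g ∈ Sfix n) (hh : h ∈ Sfix n) : lenF w ≤ lenF (g * w * h) := by
  apply Finset.card_le_card_of_injOn (fun p => (h⁻¹ p.1, h⁻¹ p.2)) (fun p hp => mf_maps hw hg hh p hp)
  intro p _ q _ hpq
  simp only [Prod.mk.injEq] at hpq
  exact Prod.ext (h⁻¹.injective hpq.1) (h⁻¹.injective hpq.2)

/-- If `t = g w h` has the same length as the minimal-form `w`, then `t` is minimal form. -/
lemma mf_of_len_eq {n : ℕ} {w g h : Equiv.Perm (Fin (2 * n))} (hw : MF n w)
    (hg : g ∈ Sfix n) (hh : h ∈ Sfix n) (hlen : lenF (g * w * h) ≤ lenF w) :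
    MF n (g * w * h) := by
  have hsurj := Finset.surj_on_of_inj_on_of_card_le
    (s := invF w) (t := invF (g * w * h)) (fun p _ => (h⁻¹ p.1, h⁻¹ p.2))
    (fun p hp => mf_maps hw hg hh p hp)
    (fun p q hp hq hpq => by
      simp only [Prod.mk.injEq] at hpq
      exact Prod.ext (h⁻¹.injective hpq.1) (h⁻¹.injective hpq.2))
    hlen
  intro p q hpq hinv
  obtain ⟨⟨p1, p2⟩, hmem, heq⟩ := hsurj (p, q) ((mem_invF _ _).mpr ⟨hpq, hinv⟩)
  rw [mem_invF] at hmem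
  obtain ⟨hlt, hi⟩ := hmem
  obtain ⟨hq2, hv1⟩ := hw p1 p2 hlt hi
  simp only [Prod.mk.injEq] at heq
  have hh' : h⁻¹ ∈ Sfix n := sfix_inv hh
  have e2 : h⁻¹ p2 = p2 := hh' p2 hq2
  constructor
  · rw [heq.2, e2]; exact hq2
  · rw [heq.1]
    have : (g * w * h) (h⁻¹ p1) = g (w p1) := by simp [Equiv.Perm.mul_apply]
    rw [this, hg (w p1) hv1]
    exact hv1

/-- Two strictly monotone maps on a finset with equal images agree. -/
lemma mono_agree {α β : Type*} [LinearOrder α] [LinearOrder β] (f g : α → β) :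
    ∀ s : Finset α, (∀ x ∈ s, ∀ y ∈ s, x < y → f x < f y) →
    (∀ x ∈ s, ∀ y ∈ s, x < y → g x < g y) →
    s.image f = s.image g → ∀ x ∈ s, f x = g x := by
  intro s
  induction s using Finset.strongInduction with
  | _ s ihs =>
    intro hf hg him x hx
    have hne : s.Nonempty := ⟨x, hx⟩
    set M := s.max' hne with hM
    have hMs : M ∈ s := s.max'_mem hne
    have hmaxf : (s.image f).max' (hne.image f) = f M := by
      apply le_antisymm
      · apply Finset.max'_le
        intro y hy
        obtain ⟨z, hz, rfl⟩ := Finset.mem_image.mp hy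
        rcases eq_or_lt_of_le (s.le_max' z hz) with h1 | h1
        · rw [h1]
        · exact (hf z hz M hMs h1).le
      · exact Finset.le_max' _ _ (Finset.mem_image_of_mem f hMs)
    have hmaxg : (s.image g).max' (hne.image g) = g M := by
      apply le_antisymm
      · apply Finset.max'_le
        intro y hy
        obtain ⟨z, hz, rfl⟩ := Finset.mem_image.mp hy
        rcases eq_or_lt_of_le (s.le_max' z hz) with h1 | h1
        · rw [h1]
        · exact (hg z hz M hMs h1).le
      · exact Finset.le_max' _ _ (Finset.mem_image_of_mem g hMs)
    have hfM : f M = g M := by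
      rw [← hmaxf, ← hmaxg]
      congr 1
    rcases eq_or_ne x M with rfl | hxM
    · exact hfM
    · -- recurse on s.erase M
      have hsub : s.erase M ⊂ s := Finset.erase_ssubset hMs
      have himf : (s.erase M).image f = (s.image f).erase (f M) := by
        ext v
        simp only [Finset.mem_image, Finset.mem_erase]
        constructor
        · rintro ⟨z, ⟨hzM, hzs⟩, rfl⟩
          refine ⟨?_, z, hzs, rfl⟩
          intro hc
          have hzlt : z < M := lt_of_le_of_ne (s.le_max' z hzs) hzM
          exact absurd hc (ne_of_lt (hf z hzs M hMs hzlt))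
        · rintro ⟨hv, z, hzs, rfl⟩
          refine ⟨z, ⟨?_, hzs⟩, rfl⟩
          rintro rfl; exact hv rfl
      have himg' : (s.erase M).image g = (s.image g).erase (g M) := by
        ext v
        simp only [Finset.mem_image, Finset.mem_erase]
        constructor
        · rintro ⟨z, ⟨hzM, hzs⟩, rfl⟩
          refine ⟨?_, z, hzs, rfl⟩
          intro hc
          have hzlt : z < M := lt_of_le_of_ne (s.le_max' z hzs) hzM
          exact absurd hc (ne_of_lt (hg z hzs M hMs hzlt))
        · rintro ⟨hv, z, hzs, rfl⟩
          refine ⟨z, ⟨?_, hzs⟩, rfl⟩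
          rintro rfl; exact hv rfl
      refine ihs (s.erase M) hsub
        (fun a ha b hb hab => hf a (Finset.mem_of_mem_erase ha) b (Finset.mem_of_mem_erase hb) hab)
        (fun a ha b hb hab => hg a (Finset.mem_of_mem_erase ha) b (Finset.mem_of_mem_erase hb) hab)
        ?_ x (Finset.mem_erase.mpr ⟨hxM, hx⟩)
      rw [himf, himg', him, hfM]

/-- Two upward-closed subsets of a finite linear order with equal cardinality coincide. -/
lemma upclosed_eq {β : Type*} [LinearOrder β] (A s t : Finset β) (hs : s ⊆ A) (ht : t ⊆ A)
    (hsc : ∀ v ∈ s, ∀ v' ∈ A, v ≤ v' → v' ∈ s) (htc : ∀ v ∈ t, ∀ v' ∈ A, v ≤ v' → v' ∈ t)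
    (hcard : s.card = t.card) : s = t := by
  have key : ∀ (s t : Finset β), s ⊆ A → t ⊆ A →
      (∀ v ∈ s, ∀ v' ∈ A, v ≤ v' → v' ∈ s) → (∀ v ∈ t, ∀ v' ∈ A, v ≤ v' → v' ∈ t) →
      s.card = t.card → s ⊆ t := by
    intro s t hs ht hsc htc hcard v hv
    by_contra hvt
    have hsub : t ⊆ s.erase v := by
      intro u hu
      have hvu : v < u := by
        rcases le_or_gt u v with h1 | h1
        · exact absurd (htc u hu v (hs hv) h1) hvt
        · exact h1
      exact Finset.mem_erase.mpr ⟨(ne_of_lt hvu).symm, hsc v hv u (ht hu) hvu.le⟩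
    have := (Finset.card_le_card hsub).trans (Finset.card_erase_le)
    have h2 : (s.erase v).card < s.card := Finset.card_erase_lt_of_mem hv
    have h3 := Finset.card_le_card hsub
    omega
  exact Finset.Subset.antisymm (key s t hs ht hsc htc hcard)
    (key t s ht hs htc hsc hcard.symm)

lemma mf_monoV {n : ℕ} {σ : Equiv.Perm (Fin (2 * n))} (hσ : MF n σ) :
    ∀ p q : Fin (2 * n), p < q → ((σ p : Fin (2 * n)) : ℕ) < n → σ p < σ q := by
  intro p q hpq hv
  rcases lt_trichotomy (σ p) (σ q) with h | h | h
  · exact h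
  · exact absurd (σ.injective h) (ne_of_lt hpq)
  · have := (hσ p q hpq h).2; omega

lemma mf_monoP {n : ℕ} {σ : Equiv.Perm (Fin (2 * n))} (hσ : MF n σ) :
    ∀ p q : Fin (2 * n), p < q → (q : ℕ) < n → σ p < σ q := by
  intro p q hpq hv
  rcases lt_trichotomy (σ p) (σ q) with h | h | h
  · exact h
  · exact absurd (σ.injective h) (ne_of_lt hpq)
  · have := (hσ p q hpq h).1; omega

theorem Equiv.Perm.apply_inv_self {α : Type*} (f : Equiv.Perm α) (x : α) : f (f⁻¹ x) = x :=
  f.apply_symm_apply x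

theorem Equiv.Perm.inv_apply_self {α : Type*} (f : Equiv.Perm α) (x : α) : f⁻¹ (f x) = x :=
  f.symm_apply_apply x

lemma mf_unique {n : ℕ} {w t g h : Equiv.Perm (Fin (2 * n))} (hw : MF n w) (ht : MF n t)
    (hg : g ∈ Sfix n) (hh : h ∈ Sfix n) (hgh : t = g * w * h) : t = w := by
  have F1 : ∀ p : Fin (2 * n), n ≤ (p : ℕ) → t p = g (w p) := by
    intro p hp
    rw [hgh]
    simp only [Equiv.Perm.mul_apply, hh p hp]
  have F2 : ∀ p : Fin (2 * n), n ≤ (p : ℕ) → n ≤ ((w p : Fin (2 * n)) : ℕ) → t p = w p := by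
    intro p hp hwp
    rw [F1 p hp, hg (w p) hwp]
  have F3 : ∀ p : Fin (2 * n), n ≤ (p : ℕ) →
      (((t p : Fin (2 * n)) : ℕ) < n ↔ ((w p : Fin (2 * n)) : ℕ) < n) := by
    intro p hp
    constructor
    · intro h1
      by_contra h2
      push_neg at h2
      rw [F2 p hp h2] at h1
      omega
    · intro h1
      rw [F1 p hp]
      exact sfix_lt hg h1
  set SB : Finset (Fin (2 * n)) :=
    Finset.univ.filter (fun p => n ≤ (p : ℕ) ∧ ((w p : Fin (2 * n)) : ℕ) < n) with hSB
  have hmemSB : ∀ p : Fin (2 * n), p ∈ SB ↔ n ≤ (p : ℕ) ∧ ((w p : Fin (2 * n)) : ℕ) < n := by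
    intro p; simp [hSB]
  have hmemSBt : ∀ p : Fin (2 * n), p ∈ SB ↔ n ≤ (p : ℕ) ∧ ((t p : Fin (2 * n)) : ℕ) < n := by
    intro p
    rw [hmemSB]
    constructor
    · rintro ⟨h1, h2⟩; exact ⟨h1, (F3 p h1).mpr h2⟩
    · rintro ⟨h1, h2⟩; exact ⟨h1, (F3 p h1).mp h2⟩
  set Afin : Finset (Fin (2 * n)) := Finset.univ.filter (fun v => (v : ℕ) < n) with hAfin
  -- image of SB under a MF permutation σ
  have himchar : ∀ σ : Equiv.Perm (Fin (2 * n)),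
      (Finset.univ.filter (fun p : Fin (2 * n) =>
        n ≤ (p : ℕ) ∧ ((σ p : Fin (2 * n)) : ℕ) < n)).image σ =
      Finset.univ.filter (fun v : Fin (2 * n) =>
        (v : ℕ) < n ∧ n ≤ ((σ⁻¹ v : Fin (2 * n)) : ℕ)) := by
    intro σ
    ext v
    simp only [Finset.mem_image, Finset.mem_filter, Finset.mem_univ, true_and]
    constructor
    · rintro ⟨p, ⟨h1, h2⟩, rfl⟩
      rw [Equiv.Perm.inv_apply_self]
      exact ⟨h2, h1⟩
    · rintro ⟨h1, h2⟩
      exact ⟨σ⁻¹ v, ⟨h2, by rwa [Equiv.Perm.apply_inv_self]⟩, Equiv.Perm.apply_inv_self σ v⟩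
  have hupcl : ∀ σ : Equiv.Perm (Fin (2 * n)), MF n σ →
      ∀ v ∈ Finset.univ.filter (fun v : Fin (2 * n) =>
        (v : ℕ) < n ∧ n ≤ ((σ⁻¹ v : Fin (2 * n)) : ℕ)),
      ∀ v' ∈ Afin, v ≤ v' → v' ∈ Finset.univ.filter (fun v : Fin (2 * n) =>
        (v : ℕ) < n ∧ n ≤ ((σ⁻¹ v : Fin (2 * n)) : ℕ)) := by
    intro σ hσ v hv v' hv' hle
    simp only [Finset.mem_filter, Finset.mem_univ, true_and] at hv ⊢
    simp only [hAfin, Finset.mem_filter, Finset.mem_univ, true_and] at hv'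
    refine ⟨hv', ?_⟩
    rcases eq_or_lt_of_le hle with rfl | hlt
    · exact hv.2
    · by_contra hc
      push_neg at hc
      have hqp : σ⁻¹ v' < σ⁻¹ v := by rw [Fin.lt_def]; omega
      have hinv : σ (σ⁻¹ v) < σ (σ⁻¹ v') := by
        rw [Equiv.Perm.apply_inv_self, Equiv.Perm.apply_inv_self]; exact hlt
      have := (hσ (σ⁻¹ v') (σ⁻¹ v) hqp hinv).2
      rw [Equiv.Perm.apply_inv_self] at this
      omega
  -- images of SB under w and t coincide
  have himw : SB.image w = Finset.univ.filter (fun v : Fin (2 * n) =>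
      (v : ℕ) < n ∧ n ≤ ((w⁻¹ v : Fin (2 * n)) : ℕ)) := himchar w
  have himt : SB.image t = Finset.univ.filter (fun v : Fin (2 * n) =>
      (v : ℕ) < n ∧ n ≤ ((t⁻¹ v : Fin (2 * n)) : ℕ)) := by
    have : SB = Finset.univ.filter (fun p : Fin (2 * n) =>
        n ≤ (p : ℕ) ∧ ((t p : Fin (2 * n)) : ℕ) < n) := by
      ext p
      rw [hmemSBt p, Finset.mem_filter]
      simp
    rw [this]
    exact himchar t
  have himeq : SB.image w = SB.image t := by
    rw [himw, himt]
    apply upclosed_eq Afin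
    · intro v hv
      simp only [Finset.mem_filter, Finset.mem_univ, true_and] at hv
      simp only [hAfin, Finset.mem_filter, Finset.mem_univ, true_and]
      exact hv.1
    · intro v hv
      simp only [Finset.mem_filter, Finset.mem_univ, true_and] at hv
      simp only [hAfin, Finset.mem_filter, Finset.mem_univ, true_and]
      exact hv.1
    · exact hupcl w hw
    · exact hupcl t ht
    · rw [← himw, ← himt, Finset.card_image_of_injOn (w.injective.injOn),
        Finset.card_image_of_injOn (t.injective.injOn)]
  have hstep1 : ∀ p ∈ SB, w p = t p := by
    apply mono_agree w t SB
    · intro x hx y hy hxy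
      exact mf_monoV hw x y hxy ((hmemSB x).mp hx).2
    · intro x hx y hy hxy
      exact mf_monoV ht x y hxy ((hmemSBt x).mp hx).2
    · convert himeq using 2
  have hB : ∀ p : Fin (2 * n), n ≤ (p : ℕ) → t p = w p := by
    intro p hp
    rcases Nat.lt_or_ge ((w p : Fin (2 * n)) : ℕ) n with h1 | h1
    · exact (hstep1 p ((hmemSB p).mpr ⟨hp, h1⟩)).symm
    · exact F2 p hp h1
  -- A positions
  set sA : Finset (Fin (2 * n)) := Finset.univ.filter (fun p => (p : ℕ) < n) with hsA
  set sB : Finset (Fin (2 * n)) := Finset.univ.filter (fun p => n ≤ (p : ℕ)) with hsB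
  have hcompl : ∀ σ : Equiv.Perm (Fin (2 * n)), sA.image σ = (sB.image σ)ᶜ := by
    intro σ
    ext v
    simp only [Finset.mem_compl, Finset.mem_image, hsA, hsB, Finset.mem_filter,
      Finset.mem_univ, true_and]
    constructor
    · rintro ⟨p, hp, rfl⟩ ⟨q, hq, hqe⟩
      have := σ.injective hqe
      omega
    · intro hno
      refine ⟨σ⁻¹ v, ?_, Equiv.Perm.apply_inv_self σ v⟩
      by_contra hc
      push_neg at hc
      exact hno ⟨σ⁻¹ v, hc, Equiv.Perm.apply_inv_self σ v⟩
  have himB : sB.image w = sB.image t := by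
    apply Finset.image_congr
    intro p hp
    simp only [hsB, Finset.coe_filter, Set.mem_setOf_eq] at hp
    exact (hB p hp.2).symm
  have himA : sA.image w = sA.image t := by
    rw [hcompl w, hcompl t, himB]
  have hA : ∀ p ∈ sA, w p = t p := by
    apply mono_agree w t sA
    · intro x hx y hy hxy
      simp only [hsA, Finset.mem_filter, Finset.mem_univ, true_and] at hy
      exact mf_monoP hw x y hxy hy
    · intro x hx y hy hxy
      simp only [hsA, Finset.mem_filter, Finset.mem_univ, true_and] at hy
      exact mf_monoP ht x y hxy hy
    · convert himA using 2
  apply Equiv.ext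
  intro p
  rcases Nat.lt_or_ge (p : ℕ) n with h1 | h1
  · exact (hA p (by simp [hsA, h1])).symm
  · exact hB p h1

/-- For every admissible sequence `[k_n, …, k_1]`, the permutation
`w = c_{k_n,n} ⋯ c_{k_1,1}` is the unique element of minimal length in its double coset
`O_w`, and `ℓ(w) = k_n + ⋯ + k_1`. -/
theorem cycProd_unique_minimal (n : ℕ) (hn : 1 ≤ n) (k : ℕ → ℕ) (hk : Admissible n k) :
    (∀ t ∈ dcoset n (cycProd n k), len n (cycProd n k) ≤ len n t) ∧
    (∀ w ∈ dcoset n (cycProd n k),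
      (∀ t ∈ dcoset n (cycProd n k), len n w ≤ len n t) → w = cycProd n k) ∧
    len n (cycProd n k) = ∑ j ∈ Finset.Icc 1 n, k j := by
  obtain ⟨hS, hC, hV, hL⟩ := main_inv n hn k hk n le_rfl
  have hQ : cycProd n k = Qp n k n := rfl
  have hMF : MF n (cycProd n k) := by
    intro p q hpq hinv
    rw [hQ] at hinv ⊢
    have hq : n ≤ (q : ℕ) := by
      by_contra hc
      push_neg at hc
      exact absurd hinv (asymm (hS p q hpq (by omega)))
    refine ⟨hq, ?_⟩
    by_contra hc
    push_neg at hc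
    have hinv' : ((Qp n k n q : Fin (2 * n)) : ℕ) < ((Qp n k n p : Fin (2 * n)) : ℕ) := hinv
    have := hV p q hpq (by omega) hc (by omega)
    exact absurd hinv (asymm this)
  have hsum : ∑ t ∈ Finset.range n, k (n - t) = ∑ j ∈ Finset.Icc 1 n, k j := by
    apply Finset.sum_nbij' (i := fun t => n - t) (j := fun j => n - j) <;>
      intros <;> simp_all [Finset.mem_range, Finset.mem_Icc] <;> omega
  refine ⟨?_, ?_, ?_⟩
  · rintro t ⟨g, hg, h, hh, rfl⟩
    rw [len_eq_lenF, len_eq_lenF]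
    exact mf_min hMF hg hh
  · rintro v ⟨g, hg, h, hh, rfl⟩ hmin
    have hwmem : cycProd n k ∈ dcoset n (cycProd n k) :=
      ⟨1, one_mem_sfix n, 1, one_mem_sfix n, by rw [one_mul, mul_one]⟩
    have h1 : lenF (g * cycProd n k * h) ≤ lenF (cycProd n k) := by
      have := hmin (cycProd n k) hwmem
      rwa [len_eq_lenF, len_eq_lenF] at this
    exact mf_unique hMF (mf_of_len_eq hMF hg hh h1) hg hh rfl
  · rw [len_eq_lenF, hQ, hL, hsum]
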